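/- Let q be a nonzero complex number and let α₁, …, α₂₂ be complex numbers. For every integer n ≥ 1 define N_X(n) = 1 + qⁿ + Σ_{j=1}^{22} αⱼⁿ + q^{2n} + q^{3n} + q^{4n} and N_A(n) = 1 + Σ_{j=1}^{22} (αⱼ/q)ⁿ + q^{2n}. Then for every n ≥ 1 one has N_A(n)·(N_A(n) − 1)/2 + (qⁿ + 1)·N_A(n) + (N_A(2n) − N_A(n))/2 = (N_X(n)² − 2·(1 + q^{4n})·N_X(n) + N_X(2n)) / (2·q^{2n}). -/

import Mathlib

open Finset

/-- The algebraic identity underlying `Z_{A_X^{[2]}}(T) = Z_{F₁(X)}(T)`: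
`N_X n` is the point count of a cubic fourfold, `N_A n` the point count of its
K3 category, the left side is the Göttsche Hilbert-square point count and the
right side is the Galkin–Shinder formula for the Fano variety of lines. -/
theorem stmt0 (q : ℂ) (hq : q ≠ 0) (α : Fin 22 → ℂ)
    (NX NA : ℕ → ℂ)
    (hNX : ∀ n : ℕ, 1 ≤ n →
      NX n = 1 + q ^ n + (∑ j : Fin 22, (α j) ^ n) + q ^ (2 * n) + q ^ (3 * n) + q ^ (4 * n))
    (hNA : ∀ n : ℕ, 1 ≤ n →
      NA n = 1 + (∑ j : Fin 22, (α j / q) ^ n) + q ^ (2 * n)) :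
    ∀ n : ℕ, 1 ≤ n →
      NA n * (NA n - 1) / 2 + (q ^ n + 1) * NA n + (NA (2 * n) - NA n) / 2
        = (NX n ^ 2 - 2 * (1 + q ^ (4 * n)) * NX n + NX (2 * n)) / (2 * q ^ (2 * n)) := by
  intro n hn
  have h2 : 1 ≤ 2 * n := by omega
  rw [hNX n hn, hNX _ h2, hNA n hn, hNA _ h2]
  simp only [div_pow, ← Finset.sum_div]
  have hqn : q ^ n ≠ 0 := pow_ne_zero _ hq
  have hm : ∀ k : ℕ, 2 * (k * n) = (2 * k) * n ∧ k * (2 * n) = (2*k) * n := by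
    intro k; constructor <;> ring
  have e1 : (2 : ℕ) * (2 * n) = 4 * n := by ring
  have e2 : (3 : ℕ) * (2 * n) = 6 * n := by ring
  have e3 : (4 : ℕ) * (2 * n) = 8 * n := by ring
  rw [e1, e2, e3]
  have hα : ∀ j : Fin 22, α j ^ (2 * n) = (α j ^ n) ^ 2 := fun j => by rw [← pow_mul, Nat.mul_comm]
  simp only [hα]
  set s := ∑ j : Fin 22, α j ^ n with hs
  have hsum2 : ∑ j : Fin 22, (α j ^ n) ^ 2 = ∑ j : Fin 22, (α j ^ n) ^ 2 := rfl
  set t := ∑ j : Fin 22, (α j ^ n) ^ 2 with ht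
  have p2 : q ^ (2 * n) = (q ^ n) ^ 2 := by rw [← pow_mul, Nat.mul_comm]
  have p3 : q ^ (3 * n) = (q ^ n) ^ 3 := by rw [← pow_mul, Nat.mul_comm]
  have p4 : q ^ (4 * n) = (q ^ n) ^ 4 := by rw [← pow_mul, Nat.mul_comm]
  have p6 : q ^ (6 * n) = (q ^ n) ^ 6 := by rw [← pow_mul, Nat.mul_comm]
  have p8 : q ^ (8 * n) = (q ^ n) ^ 8 := by rw [← pow_mul, Nat.mul_comm]
  rw [p2, p3, p4, p6, p8]
  revert hqn
  generalize q ^ n = x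
  intro hx0
  have hc : x ^ 6 * x⁻¹ ^ 6 = 1 := by
    rw [← mul_pow, mul_inv_cancel₀ hx0, one_pow]
  field_simp
  ring
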